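/- Let (Q,Z) be a locally gentle pair and v a relational vertex of Q. Then the levee (Q^v, Z^v) of (Q,Z) at v is again a locally gentle pair. -/

import Mathlib

attribute [local instance] Classical.propDecidable

/-- A quiver: vertices, arrows, head and tail maps. -/
structure Quiv where
  V : Type
  A : Type
  h : A → V
  t : A → V

/-- A (possibly empty) list of arrows is a path when consecutive arrows compose:
`t aᵢ = h aᵢ₊₁` (paths are written right-to-left as in the paper). -/
def Quiv.IsPath (Q : Quiv) (p : List Q.A) : Prop :=
  p.Chain' (fun x y => Q.t x = Q.h y)

/-- A locally gentle pair `(Q,Z)`: `Z` is a set of length-2 paths (pairs `(b,a)` with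
`t b = h a`), every vertex is head (resp. tail) of at most two arrows, and each arrow
extends in at most one way inside `Z` and at most one way outside `Z` on each side. -/
structure LocallyGentle (Q : Quiv) (Z : Set (Q.A × Q.A)) : Prop where
  comp : ∀ p ∈ Z, Q.t p.1 = Q.h p.2
  head_two : ∀ (v : Q.V) (a b c : Q.A),
    Q.h a = v → Q.h b = v → Q.h c = v → a = b ∨ a = c ∨ b = c
  tail_two : ∀ (v : Q.V) (a b c : Q.A),
    Q.t a = v → Q.t b = v → Q.t c = v → a = b ∨ a = c ∨ b = c
  rel_right : ∀ b a a' : Q.A, (b, a) ∈ Z → (b, a') ∈ Z → a = a'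
  adm_right : ∀ b a a' : Q.A, Q.t b = Q.h a → Q.t b = Q.h a' →
    (b, a) ∉ Z → (b, a') ∉ Z → a = a'
  rel_left : ∀ b c c' : Q.A, (c, b) ∈ Z → (c', b) ∈ Z → c = c'
  adm_left : ∀ b c c' : Q.A, Q.t c = Q.h b → Q.t c' = Q.h b →
    (c, b) ∉ Z → (c', b) ∉ Z → c = c'

/-- A vertex is relational if some relation `ba ∈ Z` passes through it,
i.e. `t b = v = h a`. -/
def Relational (Q : Quiv) (Z : Set (Q.A × Q.A)) (v : Q.V) : Prop :=
  ∃ b a : Q.A, (b, a) ∈ Z ∧ Q.t b = v ∧ Q.h a = v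

/-- The levee of `(Q,Z)` at a relational vertex `v`, relative to a chosen relation
`(b,a) ∈ Z` through `v`.  The vertex `v` is replaced by two new vertices
`v(♯) = Sum.inr true` and `v(♭) = Sum.inr false`; arrows are unchanged; an arrow `x`
with tail `v` gets new tail `v(♯)` iff `(x,a) ∈ Z`, and an arrow `y` with head `v`
gets new head `v(♭)` iff `(b,y) ∈ Z`. -/
noncomputable def levee (Q : Quiv) (Z : Set (Q.A × Q.A)) (v : Q.V) (b a : Q.A) : Quiv where
  V := {u : Q.V // u ≠ v} ⊕ Bool
  A := Q.A
  h := fun x =>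
    if hx : Q.h x = v then (if (b, x) ∈ Z then Sum.inr false else Sum.inr true)
    else Sum.inl ⟨Q.h x, hx⟩
  t := fun x =>
    if hx : Q.t x = v then (if (x, a) ∈ Z then Sum.inr true else Sum.inr false)
    else Sum.inl ⟨Q.t x, hx⟩

/-- The relation set of the levee: the relations of `Z` not passing through `v`. -/
def leveeZ (Q : Quiv) (Z : Set (Q.A × Q.A)) (v : Q.V) : Set (Q.A × Q.A) :=
  {p | p ∈ Z ∧ Q.t p.1 ≠ v ∧ Q.h p.2 ≠ v}

/-- The levee of a locally gentle pair at a relational vertex is again locally gentle. -/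
theorem stmt1 (Q : Quiv) (Z : Set (Q.A × Q.A)) (lg : LocallyGentle Q Z)
    (v : Q.V) (b a : Q.A) (hba : (b, a) ∈ Z) (htb : Q.t b = v) (hha : Q.h a = v) :
    LocallyGentle (levee Q Z v b a) (leveeZ Q Z v) := by
  -- characterizations of heads/tails in the levee
  have hheq : ∀ x y : Q.A, (levee Q Z v b a).h x = (levee Q Z v b a).h y → Q.h x = Q.h y := by
    intro x y hxy
    simp only [levee] at hxy
    by_cases hx : Q.h x = v <;> by_cases hy : Q.h y = v <;>
      simp only [hx, hy, dif_pos, dif_neg, not_false_iff] at hxy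
    · exact hx.trans hy.symm
    · split_ifs at hxy <;> exact absurd hxy (by simp)
    · split_ifs at hxy <;> exact absurd hxy (by simp)
    · exact congrArg Subtype.val (Sum.inl_injective hxy)
  have hteq : ∀ x y : Q.A, (levee Q Z v b a).t x = (levee Q Z v b a).t y → Q.t x = Q.t y := by
    intro x y hxy
    simp only [levee] at hxy
    by_cases hx : Q.t x = v <;> by_cases hy : Q.t y = v <;>
      simp only [hx, hy, dif_pos, dif_neg, not_false_iff] at hxy
    · exact hx.trans hy.symm
    · split_ifs at hxy <;> exact absurd hxy (by simp)
    · split_ifs at hxy <;> exact absurd hxy (by simp)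
    · exact congrArg Subtype.val (Sum.inl_injective hxy)
  constructor
  · rintro ⟨m, n⟩ ⟨hZ, hm, hn⟩
    show (levee Q Z v b a).t m = (levee Q Z v b a).h n
    simp only [levee, dif_neg hm, dif_neg hn]
    exact congrArg Sum.inl (Subtype.ext (lg.comp _ hZ))
  · intro w x y z hx hy hz
    exact lg.head_two (Q.h x) x y z rfl (hheq y x (hy.trans hx.symm))
      (hheq z x (hz.trans hx.symm))
  · intro w x y z hx hy hz
    exact lg.tail_two (Q.t x) x y z rfl (hteq y x (hy.trans hx.symm))
      (hteq z x (hz.trans hx.symm))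
  · rintro m n n' ⟨hZ, _, _⟩ ⟨hZ', _, _⟩
    exact lg.rel_right m n n' hZ hZ'
  · intro m n n' h1 h2 hn hn'
    -- analyze (levee).t m
    by_cases hm : Q.t m = v
    · by_cases hma : (m, a) ∈ Z
      · -- tail is inr true : heads of n, n' are v with (b,n)∉Z, (b,n')∉Z
        have key : ∀ k : Q.A, (levee Q Z v b a).t m = (levee Q Z v b a).h k →
            Q.h k = v ∧ (b, k) ∉ Z := by
          intro k hk
          simp only [levee, dif_pos hm, if_pos hma] at hk
          by_cases h : Q.h k = v
          · refine ⟨h, ?_⟩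
            intro hbk
            simp only [levee, dif_pos h, if_pos hbk] at hk
            split_ifs at hk with hh <;> simp_all <;> exact hh hma
          · simp only [levee, dif_neg h] at hk
            split_ifs at hk <;> simp_all
        obtain ⟨hnv, hbn⟩ := key n h1
        obtain ⟨hn'v, hbn'⟩ := key n' h2
        have hna : n ≠ a := fun h => hbn (h ▸ hba)
        have hn'a : n' ≠ a := fun h => hbn' (h ▸ hba)
        rcases lg.head_two v n n' a hnv hn'v hha with h | h | h
        · exact h
        · exact absurd h hna
        · exact absurd h hn'a
      · -- tail is inr false : heads of n, n' are v with (b,n)∈Z, (b,n')∈Z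
        have key : ∀ k : Q.A, (levee Q Z v b a).t m = (levee Q Z v b a).h k →
            (b, k) ∈ Z := by
          intro k hk
          simp only [levee, dif_pos hm, if_neg hma] at hk
          by_cases h : Q.h k = v
          · by_contra hbk
            simp only [levee, dif_pos h, if_neg hbk] at hk
            split_ifs at hk with hh <;> simp_all <;> exact hma hh
          · simp only [levee, dif_neg h] at hk
            split_ifs at hk <;> simp_all
        exact lg.rel_right b n n' (key n h1) (key n' h2)
    · -- tail is inl : reduces to original adm_right
      have key : ∀ k : Q.A, (levee Q Z v b a).t m = (levee Q Z v b a).h k →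
          Q.h k ≠ v ∧ Q.t m = Q.h k := by
        intro k hk
        simp only [levee, dif_neg hm] at hk
        by_cases h : Q.h k = v
        · simp only [levee, dif_pos h] at hk
          split_ifs at hk <;> exact absurd hk (by simp)
        · simp only [levee, dif_neg h] at hk
          exact ⟨h, congrArg Subtype.val (Sum.inl_injective hk)⟩
      obtain ⟨hnv, he⟩ := key n h1
      obtain ⟨hn'v, he'⟩ := key n' h2
      have hn2 : (m, n) ∉ Z := fun h => hn ⟨h, hm, hnv⟩
      have hn2' : (m, n') ∉ Z := fun h => hn' ⟨h, hm, hn'v⟩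
      exact lg.adm_right m n n' he he' hn2 hn2'
  · rintro m n n' ⟨hZ, _, _⟩ ⟨hZ', _, _⟩
    exact lg.rel_left m n n' hZ hZ'
  · intro m c c' h1 h2 hc hc'
    by_cases hm : Q.h m = v
    · by_cases hbm : (b, m) ∈ Z
      · -- head is inr false : tails of c, c' are v with (c,a)∉Z
        have key : ∀ k : Q.A, (levee Q Z v b a).t k = (levee Q Z v b a).h m →
            Q.t k = v ∧ (k, a) ∉ Z := by
          intro k hk
          simp only [levee, dif_pos hm, if_pos hbm] at hk
          by_cases h : Q.t k = v
          · refine ⟨h, ?_⟩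
            intro hka
            simp only [levee, dif_pos h, if_pos hka] at hk
            split_ifs at hk with hh <;> simp_all <;> exact hh hbm
          · simp only [levee, dif_neg h] at hk
            split_ifs at hk <;> simp_all
        obtain ⟨hcv, hca⟩ := key c h1
        obtain ⟨hc'v, hc'a⟩ := key c' h2
        have hcb : c ≠ b := fun h => hca (h ▸ hba)
        have hc'b : c' ≠ b := fun h => hc'a (h ▸ hba)
        rcases lg.tail_two v c c' b hcv hc'v htb with h | h | h
        · exact h
        · exact absurd h hcb
        · exact absurd h hc'b
      · -- head is inr true : tails of c, c' are v with (c,a)∈Z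
        have key : ∀ k : Q.A, (levee Q Z v b a).t k = (levee Q Z v b a).h m →
            (k, a) ∈ Z := by
          intro k hk
          simp only [levee, dif_pos hm, if_neg hbm] at hk
          by_cases h : Q.t k = v
          · by_contra hka
            simp only [levee, dif_pos h, if_neg hka] at hk
            split_ifs at hk with hh <;> simp_all <;> exact hbm hh
          · simp only [levee, dif_neg h] at hk
            split_ifs at hk <;> simp_all
        exact lg.rel_left a c c' (key c h1) (key c' h2)
    · have key : ∀ k : Q.A, (levee Q Z v b a).t k = (levee Q Z v b a).h m →
          Q.t k ≠ v ∧ Q.t k = Q.h m := by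
        intro k hk
        simp only [levee, dif_neg hm] at hk
        by_cases h : Q.t k = v
        · simp only [levee, dif_pos h] at hk
          split_ifs at hk <;> exact absurd hk (by simp)
        · simp only [levee, dif_neg h] at hk
          exact ⟨h, congrArg Subtype.val (Sum.inl_injective hk)⟩
      obtain ⟨hcv, he⟩ := key c h1
      obtain ⟨hc'v, he'⟩ := key c' h2
      have hc2 : (c, m) ∉ Z := fun h => hc ⟨h, hcv, hm⟩
      have hc2' : (c', m) ∉ Z := fun h => hc' ⟨h, hc'v, hm⟩
      exact lg.adm_left m c c' he he' hc2 hc2'
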